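/- For every computable functional unit H for ℕ there exists a computable functional unit H' for ℕ with at most three method operations such that H ≤ H'. -/

import Mathlib

/-- Primitive instructions: plain basic `f.m`, positive test `+f.m`, negative test `-f.m`
(method names are natural numbers, there is a single focus `f`), forward jump `#l`,
backward jump `\l`, and the positive/negative termination instructions `!t` / `!f`. -/
inductive Instr : Type where
  | basic (m : ℕ)
  | postest (m : ℕ)
  | negtest (m : ℕ)
  | fjump (l : ℕ)
  | bjump (l : ℕ)
  | haltT
  | haltF
deriving DecidableEq

/-- A functional unit for a state space `S`: a finite, functional set of
(method name, method operation) pairs, where a method operation is a total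
function `S → Bool × S`. -/
structure FU (S : Type*) where
  carrier : Set (ℕ × (S → Bool × S))
  finite : carrier.Finite
  functional : ∀ {m : ℕ} {M M' : S → Bool × S},
    (m, M) ∈ carrier → (m, M') ∈ carrier → M = M'

/-- The interface of a functional unit: the set of method names occurring in it. -/
def FU.iface {S : Type*} (H : FU S) : Set ℕ := {m | ∃ M, (m, M) ∈ H.carrier}

/-- The method operation named `m` in `H` (an arbitrary fixed value if `m ∉ I(H)`). -/
noncomputable def FU.op {S : Type*} (H : FU S) (m : ℕ) (s : S) : Bool × S :=
  letI := Classical.propDecidable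
  if h : ∃ M, (m, M) ∈ H.carrier then h.choose s else (true, s)

/-- The restriction `⟨I, H⟩` of a functional unit to a set `I` of method names. -/
def FU.restrict {S : Type*} (H : FU S) (I : Set ℕ) : FU S where
  carrier := {p ∈ H.carrier | p.1 ∈ I}
  finite := H.finite.subset (Set.sep_subset _ _)
  functional := fun hM hM' => H.functional hM.1 hM'.1

/-- The method names used by an instruction all belong to `I`. -/
def Instr.namesIn (I : Set ℕ) : Instr → Prop
  | .basic m => m ∈ I
  | .postest m => m ∈ I
  | .negtest m => m ∈ I
  | _ => True

/-- An instruction sequence over a set `I` of method names: a finite nonempty list of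
primitive instructions whose method names belong to `I`. -/
def InstrSeqOver (I : Set ℕ) (x : List Instr) : Prop :=
  x ≠ [] ∧ ∀ u ∈ x, u.namesIn I

/-- `Exec H x i s b s'` : execution of the instruction sequence `x` on the functional
unit `H`, from (0-based) position `i` in state `s`, terminates delivering the Boolean
value `b` with final state `s'`.  (Position `i` here corresponds to the 1-based
position `i+1`; positions outside the sequence, jumps `#0`/`\0`, and infinite
executions admit no derivation, i.e. execution does not terminate.) -/
inductive Exec {S : Type*} (H : FU S) (x : List Instr) : ℕ → S → Bool → S → Prop where
  | basic {i : ℕ} {s : S} {b : Bool} {s' : S} (m : ℕ)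
      (hu : x[i]? = some (Instr.basic m))
      (h : Exec H x (i + 1) (H.op m s).2 b s') : Exec H x i s b s'
  | posT {i : ℕ} {s : S} {b : Bool} {s' : S} (m : ℕ)
      (hu : x[i]? = some (Instr.postest m)) (hr : (H.op m s).1 = true)
      (h : Exec H x (i + 1) (H.op m s).2 b s') : Exec H x i s b s'
  | posF {i : ℕ} {s : S} {b : Bool} {s' : S} (m : ℕ)
      (hu : x[i]? = some (Instr.postest m)) (hr : (H.op m s).1 = false)
      (h : Exec H x (i + 2) (H.op m s).2 b s') : Exec H x i s b s'
  | negT {i : ℕ} {s : S} {b : Bool} {s' : S} (m : ℕ)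
      (hu : x[i]? = some (Instr.negtest m)) (hr : (H.op m s).1 = true)
      (h : Exec H x (i + 2) (H.op m s).2 b s') : Exec H x i s b s'
  | negF {i : ℕ} {s : S} {b : Bool} {s' : S} (m : ℕ)
      (hu : x[i]? = some (Instr.negtest m)) (hr : (H.op m s).1 = false)
      (h : Exec H x (i + 1) (H.op m s).2 b s') : Exec H x i s b s'
  | fjump {i : ℕ} {s : S} {b : Bool} {s' : S} (l : ℕ)
      (hu : x[i]? = some (Instr.fjump l))
      (h : Exec H x (i + l) s b s') : Exec H x i s b s'
  | bjump {i : ℕ} {s : S} {b : Bool} {s' : S} (l : ℕ)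
      (hu : x[i]? = some (Instr.bjump l)) (hl : l ≤ i)
      (h : Exec H x (i - l) s b s') : Exec H x i s b s'
  | haltT {i : ℕ} {s : S} (hu : x[i]? = some Instr.haltT) : Exec H x i s true s
  | haltF {i : ℕ} {s : S} (hu : x[i]? = some Instr.haltF) : Exec H x i s false s

/-- `M` is a derived method operation of `H`: there is an instruction sequence `x`
over `I(H)` whose produced partial method operation `⌈x⌉_H` is total and equals `M`. -/
def DerivedOp {S : Type*} (H : FU S) (M : S → Bool × S) : Prop :=
  ∃ x : List Instr, InstrSeqOver H.iface x ∧ ∀ s, Exec H x 0 s (M s).1 (M s).2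

/-- `H ≤ H'` : every method operation of `H` is a derived method operation of `H'`. -/
def FU.le {S : Type*} (H H' : FU S) : Prop :=
  ∀ m M, (m, M) ∈ H.carrier → DerivedOp H' M

/-- `H ≡ H'` : `H ≤ H'` and `H' ≤ H`. -/
def FU.equiv {S : Type*} (H H' : FU S) : Prop := FU.le H H' ∧ FU.le H' H

/-- A method operation on ℕ is computable if both its components are. -/
def ComputableMO (M : ℕ → Bool × ℕ) : Prop :=
  Computable (fun n => (M n).1) ∧ Computable (fun n => (M n).2)

/-- A functional unit for ℕ is computable if all its method operations are. -/
def ComputableFU (H : FU ℕ) : Prop :=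
  ∀ m M, (m, M) ∈ H.carrier → ComputableMO M


/-! ### Auxiliary constructions for the three-operation extension -/

namespace ThreeOp

/-- First operation: tag the state with counter `0`. -/
def pOp (n : ℕ) : Bool × ℕ := (true, Nat.pair n 0)

/-- Second operation: increment the tag counter. -/
def incOp (n : ℕ) : Bool × ℕ := (true, Nat.pair (Nat.unpair n).1 ((Nat.unpair n).2 + 1))

/-- Third operation: dispatch on the tag, running the tagged method operation. -/
def runL : List (ℕ → Bool × ℕ) → ℕ → Bool × ℕ
  | [], n => (true, n)
  | M :: L, n =>
      bif (Nat.unpair n).2 == 0 then M (Nat.unpair n).1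
      else runL L (Nat.pair (Nat.unpair n).1 ((Nat.unpair n).2 - 1))

lemma runL_pair (L : List (ℕ → Bool × ℕ)) (i : ℕ) (h : i < L.length) (n : ℕ) :
    runL L (Nat.pair n i) = L[i] n := by
  induction L generalizing i with
  | nil => simp at h
  | cons M L ih =>
    cases i with
    | zero => simp [runL]
    | succ i =>
      have hb : ((Nat.unpair (Nat.pair n (i+1))).2 == 0) = false := by simp
      simp only [runL, hb, cond_false, Nat.unpair_pair, Nat.add_sub_cancel]
      have hi : i < L.length := by simpa using Nat.lt_of_succ_lt_succ (by simpa using h)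
      simpa using ih i hi

lemma computable_runL (L : List (ℕ → Bool × ℕ)) (hL : ∀ M ∈ L, ComputableMO M) :
    ComputableMO (runL L) := by
  induction L with
  | nil =>
    refine ⟨?_, ?_⟩
    · simpa [runL] using (Computable.const true)
    · exact (Computable.id : Computable fun n : ℕ => n)
  | cons M L ih =>
    have hM : ComputableMO M := hL M List.mem_cons_self
    have hL' : ComputableMO (runL L) := ih (fun N hN => hL N (List.mem_cons_of_mem _ hN))
    have hu1 : Computable fun n : ℕ => (Nat.unpair n).1 :=
      (Primrec.fst.comp Primrec.unpair).to_comp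
    have hu2 : Computable fun n : ℕ => (Nat.unpair n).2 :=
      (Primrec.snd.comp Primrec.unpair).to_comp
    have hc : Computable fun n : ℕ => ((Nat.unpair n).2 == 0) := by
      have : Primrec fun n : ℕ => decide ((Nat.unpair n).2 = 0) :=
        (Primrec.eq.comp (Primrec.snd.comp Primrec.unpair) (Primrec.const 0)).decide
      exact this.to_comp
    have harg : Computable fun n : ℕ => Nat.pair (Nat.unpair n).1 ((Nat.unpair n).2 - 1) :=
      (Primrec₂.natPair.comp (Primrec.fst.comp Primrec.unpair)
        (Primrec.pred.comp (Primrec.snd.comp Primrec.unpair))).to_comp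
    constructor
    · have := Computable.cond hc (hM.1.comp hu1) (hL'.1.comp harg)
      refine this.of_eq fun n => ?_
      simp only [runL]
      cases h : ((Nat.unpair n).2 == 0) <;> simp [h]
    · have := Computable.cond hc (hM.2.comp hu1) (hL'.2.comp harg)
      refine this.of_eq fun n => ?_
      simp only [runL]
      cases h : ((Nat.unpair n).2 == 0) <;> simp [h]

end ThreeOp

lemma FU.op_eq {S : Type*} (H : FU S) {m : ℕ} {M : S → Bool × S}
    (h : (m, M) ∈ H.carrier) : H.op m = M := by
  have hex : ∃ M', (m, M') ∈ H.carrier := ⟨M, h⟩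
  funext s
  simp only [FU.op]
  rw [dif_pos hex]
  exact congrFun (H.functional hex.choose_spec h) s

lemma ThreeOp.exec_main (H' : FU ℕ) (i : ℕ) (s : ℕ)
    (h0 : H'.op 0 = ThreeOp.pOp) (h1 : H'.op 1 = ThreeOp.incOp)
    (M : ℕ → Bool × ℕ) (h2 : H'.op 2 (Nat.pair s i) = M s) :
    Exec H' (Instr.basic 0 :: (List.replicate i (Instr.basic 1) ++
      [Instr.postest 2, Instr.haltT, Instr.haltF])) 0 s (M s).1 (M s).2 := by
  set x : List Instr := Instr.basic 0 :: (List.replicate i (Instr.basic 1) ++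
      [Instr.postest 2, Instr.haltT, Instr.haltF]) with hx
  have hget : ∀ j : ℕ, j < i → x[1 + j]? = some (Instr.basic 1) := by
    intro j hj
    have : (1 + j) = j + 1 := by omega
    rw [hx, this, List.getElem?_cons_succ, List.getElem?_append, List.length_replicate,
      if_pos hj, List.getElem?_replicate, if_pos hj]
  have hgetT : x[1 + i]? = some (Instr.postest 2) := by
    have : (1 + i) = i + 1 := by omega
    rw [hx, this, List.getElem?_cons_succ, List.getElem?_append_right (by simp)]
    simp
  have hgetH1 : x[1 + i + 1]? = some Instr.haltT := by
    have : (1 + i + 1) = (i + 1) + 1 := by omega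
    rw [hx, this, List.getElem?_cons_succ, List.getElem?_append_right (by simp)]
    simp
  have hgetH2 : x[1 + i + 2]? = some Instr.haltF := by
    have : (1 + i + 2) = (i + 2) + 1 := by omega
    rw [hx, this, List.getElem?_cons_succ, List.getElem?_append_right (by simp)]
    simp
  have key : ∀ k j : ℕ, j + k = i → Exec H' x (1 + j) (Nat.pair s j) (M s).1 (M s).2 := by
    intro k
    induction k with
    | zero =>
      intro j hj
      have hji : j = i := by omega
      subst hji
      cases hb : (M s).1 with
      | true =>
        refine Exec.posT 2 hgetT (by rw [h2, hb]) ?_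
        rw [h2]
        exact Exec.haltT (H := H') (x := x) (s := (M s).2) hgetH1
      | false =>
        refine Exec.posF 2 hgetT (by rw [h2, hb]) ?_
        rw [h2]
        exact Exec.haltF (H := H') (x := x) (s := (M s).2) hgetH2
    | succ k ih =>
      intro j hj
      have hji : j < i := by omega
      refine Exec.basic 1 (hget j hji) ?_
      have hst : (H'.op 1 (Nat.pair s j)).2 = Nat.pair s (j + 1) := by
        rw [h1]; simp [ThreeOp.incOp]
      rw [hst]
      have : 1 + j + 1 = 1 + (j + 1) := by omega
      rw [this]
      exact ih (j + 1) (by omega)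
  have hstep0 : x[0]? = some (Instr.basic 0) := by simp [hx]
  refine Exec.basic 0 hstep0 ?_
  have hst : (H'.op 0 s).2 = Nat.pair s 0 := by rw [h0]; rfl
  rw [hst]
  exact key i 0 (by omega)

/-- For every computable functional unit `H` for ℕ there is a computable functional
unit `H'` for ℕ with at most three method operations such that `H ≤ H'`. -/
theorem exists_three_op_extension (H : FU ℕ) (hH : ComputableFU H) :
    ∃ H' : FU ℕ, ComputableFU H' ∧ H'.carrier.ncard ≤ 3 ∧ FU.le H H' := by
  classical
  set L : List (ℕ → Bool × ℕ) := H.finite.toFinset.toList.map Prod.snd with hLdef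
  set R : ℕ → Bool × ℕ := ThreeOp.runL L with hRdef
  set C : Set (ℕ × (ℕ → Bool × ℕ)) := {(0, ThreeOp.pOp), (1, ThreeOp.incOp), (2, R)} with hC
  have hCfin : C.Finite := by
    rw [hC]
    exact (Set.finite_singleton _).insert _ |>.insert _
  have hCfun : ∀ {m : ℕ} {M M' : ℕ → Bool × ℕ},
      (m, M) ∈ C → (m, M') ∈ C → M = M' := by
    intro m M M' hM hM'
    simp only [hC, Set.mem_insert_iff, Set.mem_singleton_iff, Prod.mk.injEq] at hM hM'
    rcases hM with ⟨h1, h2⟩ | ⟨h1, h2⟩ | ⟨h1, h2⟩ <;>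
      rcases hM' with ⟨h1', h2'⟩ | ⟨h1', h2'⟩ | ⟨h1', h2'⟩ <;>
      subst_vars <;> first | rfl | omega
  set H' : FU ℕ := ⟨C, hCfin, hCfun⟩ with hH'
  have hmemL : ∀ M ∈ L, ∃ m, (m, M) ∈ H.carrier := by
    intro M hM
    rw [hLdef] at hM
    obtain ⟨⟨a, N⟩, hp, hpe⟩ := List.mem_map.mp hM
    have hmem : (a, N) ∈ H.carrier := H.finite.mem_toFinset.mp (Finset.mem_toList.mp hp)
    cases hpe
    exact ⟨a, hmem⟩
  have hLcomp : ∀ M ∈ L, ComputableMO M := by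
    intro M hM
    obtain ⟨m, hm⟩ := hmemL M hM
    exact hH m M hm
  have hop0 : H'.op 0 = ThreeOp.pOp := FU.op_eq H' (by simp [hH', hC])
  have hop1 : H'.op 1 = ThreeOp.incOp := FU.op_eq H' (by simp [hH', hC])
  have hop2 : H'.op 2 = R := FU.op_eq H' (by simp [hH', hC])
  refine ⟨H', ?_, ?_, ?_⟩
  · -- computability
    intro m M hM
    simp only [hH', hC, Set.mem_insert_iff, Set.mem_singleton_iff, Prod.mk.injEq] at hM
    rcases hM with ⟨_, h⟩ | ⟨_, h⟩ | ⟨_, h⟩ <;> subst h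
    · exact ⟨Computable.const true, (Primrec₂.natPair.comp Primrec.id (Primrec.const 0)).to_comp⟩
    · refine ⟨Computable.const true, ?_⟩
      exact (Primrec₂.natPair.comp (Primrec.fst.comp Primrec.unpair)
        (Primrec.succ.comp (Primrec.snd.comp Primrec.unpair))).to_comp
    · exact ThreeOp.computable_runL L hLcomp
  · -- at most three operations
    calc C.ncard ≤ ({(1, ThreeOp.incOp), (2, R)} :
          Set (ℕ × (ℕ → Bool × ℕ))).ncard + 1 := Set.ncard_insert_le _ _
      _ ≤ (({(2, R)} : Set (ℕ × (ℕ → Bool × ℕ))).ncard + 1) + 1 := by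
          exact Nat.add_le_add_right (Set.ncard_insert_le _ _) 1
      _ ≤ 3 := by simp [Set.ncard_singleton]
  · -- H ≤ H'
    intro m M hmM
    have hML : M ∈ L := by
      rw [hLdef]
      exact List.mem_map.mpr ⟨(m, M), Finset.mem_toList.mpr (H.finite.mem_toFinset.mpr hmM), rfl⟩
    obtain ⟨i, hi, hieq⟩ := List.mem_iff_getElem.mp hML
    refine ⟨Instr.basic 0 :: (List.replicate i (Instr.basic 1) ++
      [Instr.postest 2, Instr.haltT, Instr.haltF]), ⟨by simp, ?_⟩, ?_⟩
    · intro u hu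
      have h0 : (0 : ℕ) ∈ H'.iface := ⟨ThreeOp.pOp, by simp [hH', hC]⟩
      have h1 : (1 : ℕ) ∈ H'.iface := ⟨ThreeOp.incOp, by simp [hH', hC]⟩
      have h2 : (2 : ℕ) ∈ H'.iface := ⟨R, by simp [hH', hC]⟩
      simp only [List.mem_cons, List.mem_append, List.mem_replicate, List.mem_singleton] at hu
      rcases hu with rfl | ⟨⟨_, rfl⟩ | hu⟩
      · exact h0
      · exact h1
      · rcases hu with rfl | rfl | rfl | h
        · exact h2
        · trivial
        · trivial
        · simp at h
    · intro s
      refine ThreeOp.exec_main H' i s hop0 hop1 M ?_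
      rw [hop2, hRdef, ThreeOp.runL_pair L i hi, hieq]
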